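/- Attack splitting theorem for admissible semantics: Let (F₁,F₂,R₃) be an attack splitting of a BSAF F with closed negative links R₃ᶜ, and F₂* = mod^{E₁}_{R₃ᶜ}(F₂^{E₁}). Then (1) if E₁ ∈ adm(F₁) and E₂ ∈ adm(F₂*), then E₁ ∪ E₂ ∈ adm(F); and (2) if E ∈ adm(F), then E ∩ A₁ ∈ adm(F₁) and E ∩ A₂ ∈ adm(F₂*). -/
import Mathlib


variable {α : Type*}

/-- A bipolar set-argumentation framework: arguments `A`, collective attacks `R`,
collective supports `S`. -/
structure BSAF (α : Type*) where
  A : Set α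
  R : Set (Set α × α)
  S : Set (Set α × α)

namespace BSAF

/-- Membership in the least superset of `E` that is closed under the supports of `F`. -/
inductive InCl (F : BSAF α) (E : Set α) : α → Prop
  | base {a : α} : a ∈ E → InCl F E a
  | step {T : Set α} {h : α} : (T, h) ∈ F.S → (∀ t ∈ T, InCl F E t) → InCl F E h

/-- The closure of `E` under the supports of `F`. -/
def cl (F : BSAF α) (E : Set α) : Set α := {a | F.InCl E a}

/-- `E` is closed if its closure equals itself. -/
def Closed (F : BSAF α) (E : Set α) : Prop := F.cl E = E

/-- `E` attacks the set `D`. -/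
def Attacks (F : BSAF α) (E D : Set α) : Prop :=
  ∃ T h, (T, h) ∈ F.R ∧ T ⊆ E ∧ h ∈ D

/-- `E` is conflict-free: it does not attack itself. -/
def ConflictFree (F : BSAF α) (E : Set α) : Prop :=
  ¬ ∃ T h, (T, h) ∈ F.R ∧ T ⊆ E ∧ h ∈ E

/-- `E` defends `a`: every closed attacker of `a` is attacked by `E`. -/
def Defends (F : BSAF α) (E : Set α) (a : α) : Prop :=
  ∀ D : Set α, D ⊆ F.A → F.Closed D → (∃ T, (T, a) ∈ F.R ∧ T ⊆ D) → F.Attacks E D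

/-- `E` is admissible: conflict-free, closed, and defends each of its members. -/
def Admissible (F : BSAF α) (E : Set α) : Prop :=
  E ⊆ F.A ∧ F.ConflictFree E ∧ F.Closed E ∧ ∀ a ∈ E, F.Defends E a

/-- `E` is complete: admissible and contains every argument it defends. -/
def Complete (F : BSAF α) (E : Set α) : Prop :=
  F.Admissible E ∧ ∀ a ∈ F.A, F.Defends E a → a ∈ E

/-- Grounded: ⊆-minimal complete. -/
def Grounded (F : BSAF α) (E : Set α) : Prop :=
  F.Complete E ∧ ∀ E', F.Complete E' → E' ⊆ E → E' = E

/-- Preferred: ⊆-maximal admissible. -/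
def Preferred (F : BSAF α) (E : Set α) : Prop :=
  F.Admissible E ∧ ∀ E', F.Admissible E' → E ⊆ E' → E' = E

/-- Stable: admissible and attacks every outside argument. -/
def Stable (F : BSAF α) (E : Set α) : Prop :=
  F.Admissible E ∧ ∀ x ∈ F.A \ E, ∃ T, (T, x) ∈ F.R ∧ T ⊆ E

end BSAF
namespace BSAF

/-- All links of `G` stay within its argument set. -/
def WithinA (G : BSAF α) : Prop :=
  (∀ p ∈ G.R, p.1 ⊆ G.A ∧ p.2 ∈ G.A) ∧ (∀ p ∈ G.S, p.1 ⊆ G.A ∧ p.2 ∈ G.A)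

/-- `(F₁, F₂, R₃)` is an attack splitting of `F`. -/
def IsAttackSplitting (F F₁ F₂ : BSAF α) (R₃ : Set (Set α × α)) : Prop :=
  F₁.WithinA ∧ F₂.WithinA ∧
  F₁.A ∩ F₂.A = ∅ ∧ F.A = F₁.A ∪ F₂.A ∧
  F.S = F₁.S ∪ F₂.S ∧
  F.R = F₁.R ∪ F₂.R ∪ R₃ ∧
  ∀ p ∈ R₃, (p.1 ∩ F₁.A).Nonempty ∧ p.1 ⊆ F.A ∧ p.2 ∈ F₂.A

/-- The closed negative links `R₃ᶜ = {(cl(T), h) | (T, h) ∈ R₃}`. -/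
def closedLinks (F : BSAF α) (R₃ : Set (Set α × α)) : Set (Set α × α) :=
  {p | ∃ T h, (T, h) ∈ R₃ ∧ p = (F.cl T, h)}

/-- The arguments attacked by `E` via the attack relation `Rs`. -/
def attackedBy (Rs : Set (Set α × α)) (E : Set α) : Set α :=
  {a | ∃ T, (T, a) ∈ Rs ∧ T ⊆ E}

/-- The `(E₁, R₃ᶜ)`-reduct of `F₂`. -/
def Rreduct (F F₁ F₂ : BSAF α) (R₃ : Set (Set α × α)) (E₁ : Set α) : BSAF α where
  A := F₂.A
  R := F₂.R ∪ {p | ∃ T h, (T, h) ∈ F.closedLinks R₃ ∧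
        T ∩ attackedBy (F₁.R ∪ F.closedLinks R₃) E₁ = ∅ ∧
        T ∩ F₁.A ⊆ E₁ ∧ p = (T ∩ F₂.A, h)}
  S := F₂.S

/-- The undecided links in `R₃ᶜ` w.r.t. `E₁`. -/
def undecidedLinks (F F₁ : BSAF α) (R₃ : Set (Set α × α)) (E₁ : Set α) : Set (Set α × α) :=
  {p | p ∈ F.closedLinks R₃ ∧
    p.1 ∩ attackedBy (F₁.R ∪ F.closedLinks R₃) E₁ = ∅ ∧ ¬ p.1 ∩ F₁.A ⊆ E₁}

/-- The modification `F₂* = mod^{E₁}_{R₃ᶜ}(F₂^{E₁})`, with fresh self-attacker `s₀`. -/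
def modification (F F₁ F₂ : BSAF α) (R₃ : Set (Set α × α)) (E₁ : Set α) (s₀ : α) : BSAF α where
  A := F₂.A ∪ {s₀}
  R := (F.Rreduct F₁ F₂ R₃ E₁).R ∪ {({s₀}, s₀)} ∪
       {p | ∃ T h, (T, h) ∈ F.undecidedLinks F₁ R₃ E₁ ∧ p = ((T ∩ F₂.A) ∪ {s₀}, h)}
  S := F₂.S

end BSAF


namespace BSAF

lemma InCl.mono_S {F G : BSAF α} (hS : F.S ⊆ G.S) {E : Set α} {a : α}
    (h : F.InCl E a) : G.InCl E a := by
  induction h with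
  | base h => exact .base h
  | step h1 _ ih => exact .step (hS h1) ih

lemma InCl.mono_E {F : BSAF α} {E E' : Set α} (hE : E ⊆ E') {a : α}
    (h : F.InCl E a) : F.InCl E' a := by
  induction h with
  | base h => exact .base (hE h)
  | step h1 _ ih => exact .step h1 ih

lemma InCl.of_cl {F : BSAF α} {E : Set α} {a : α} (h : F.InCl (F.cl E) a) :
    F.InCl E a := by
  induction h with
  | base h => exact h
  | step h1 _ ih => exact .step h1 ih

lemma mem_of_closed {F : BSAF α} {D : Set α} (hD : F.Closed D) {a : α}
    (h : F.InCl D a) : a ∈ D := by rw [← hD]; exact h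

lemma subset_cl {F : BSAF α} {E : Set α} : E ⊆ F.cl E := fun _ ha => .base ha

lemma closed_cl {F : BSAF α} {E : Set α} : F.Closed (F.cl E) :=
  Set.Subset.antisymm (fun _ h => InCl.of_cl h) subset_cl

lemma InCl.restrict {F G : BSAF α}
    (hsub : ∀ p ∈ F.S, p.2 ∈ G.A → p ∈ G.S ∧ p.1 ⊆ G.A)
    {E : Set α} {a : α} (h : F.InCl E a) : a ∈ G.A → G.InCl (E ∩ G.A) a := by
  induction h with
  | base h => exact fun ha => .base ⟨h, ha⟩
  | step h1 h2 ih =>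
      intro ha
      obtain ⟨hG, hA⟩ := hsub _ h1 ha
      exact .step hG fun t ht => ih t ht (hA ht)

lemma InCl_mem_A {G : BSAF α} {X : Set α} (hX : X ⊆ G.A)
    (hS : ∀ p ∈ G.S, p.2 ∈ G.A) {a : α} (h : G.InCl X a) : a ∈ G.A := by
  induction h with
  | base h => exact hX h
  | step h1 _ _ => exact hS _ h1

end BSAF

/-- Attack splitting theorem for admissible semantics. -/
theorem BSAF.attackSplitting_admissible (F F₁ F₂ : BSAF α) (R₃ : Set (Set α × α))
    (hsplit : F.IsAttackSplitting F₁ F₂ R₃) (hfin : F.A.Finite)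
    (s₀ : α) (hs₀ : s₀ ∉ F.A) :
    (∀ E₁ E₂ : Set α, F₁.Admissible E₁ →
      (F.modification F₁ F₂ R₃ E₁ s₀).Admissible E₂ → F.Admissible (E₁ ∪ E₂)) ∧
    (∀ E : Set α, F.Admissible E →
      F₁.Admissible (E ∩ F₁.A) ∧
      (F.modification F₁ F₂ R₃ (E ∩ F₁.A) s₀).Admissible (E ∩ F₂.A)) := by
  obtain ⟨hW1, hW2, hdisj, hA, hSeq, hReq, hR3⟩ := hsplit
  have hdisj' : ∀ a, a ∈ F₁.A → a ∈ F₂.A → False := fun a h1 h2 =>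
    Set.eq_empty_iff_forall_notMem.mp hdisj a ⟨h1, h2⟩
  have hA1sub : F₁.A ⊆ F.A := by rw [hA]; exact Set.subset_union_left
  have hA2sub : F₂.A ⊆ F.A := by rw [hA]; exact Set.subset_union_right
  have hs₀2 : s₀ ∉ F₂.A := fun h => hs₀ (hA2sub h)
  have hS1 : F₁.S ⊆ F.S := by rw [hSeq]; exact Set.subset_union_left
  have hS2 : F₂.S ⊆ F.S := by rw [hSeq]; exact Set.subset_union_right
  have hSheads : ∀ p ∈ F.S, p.2 ∈ F.A := by
    intro p hp; rw [hSeq] at hp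
    rcases hp with hp | hp
    · exact hA1sub (hW1.2 p hp).2
    · exact hA2sub (hW2.2 p hp).2
  have hclA : ∀ {X : Set α}, X ⊆ F.A → ∀ {a}, F.InCl X a → a ∈ F.A :=
    fun hX _ h => InCl_mem_A hX hSheads h
  have hres1 : ∀ {X : Set α} {a}, F.InCl X a → a ∈ F₁.A → F₁.InCl (X ∩ F₁.A) a := by
    intro X a h
    refine InCl.restrict ?_ h
    intro p hp hp2
    rw [hSeq] at hp
    rcases hp with hp | hp
    · exact ⟨hp, (hW1.2 p hp).1⟩
    · exact (hdisj' _ hp2 (hW2.2 p hp).2).elim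
  have hres2 : ∀ {X : Set α} {a}, F.InCl X a → a ∈ F₂.A → F₂.InCl (X ∩ F₂.A) a := by
    intro X a h
    refine InCl.restrict ?_ h
    intro p hp hp2
    rw [hSeq] at hp
    rcases hp with hp | hp
    · exact (hdisj' _ (hW1.2 p hp).2 hp2).elim
    · exact ⟨hp, (hW2.2 p hp).1⟩
  have hRc : ∀ p ∈ F.closedLinks R₃, p.2 ∈ F₂.A ∧ p.1 ⊆ F.A ∧ F.Closed p.1 ∧
      ∃ U, (U, p.2) ∈ R₃ ∧ U ⊆ p.1 := by
    rintro p ⟨T, h, hTh, rfl⟩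
    exact ⟨(hR3 _ hTh).2.2, fun x hx => hclA (hR3 _ hTh).2.1 hx, closed_cl,
      T, hTh, subset_cl⟩
  have hplus : ∀ (E₁ : Set α), E₁ ⊆ F₁.A → F₁.ConflictFree E₁ →
      ∀ b ∈ E₁, b ∉ attackedBy (F₁.R ∪ F.closedLinks R₃) E₁ := by
    intro E₁ hE₁A hcf b hb hmem
    obtain ⟨T, hT, hTs⟩ := hmem
    rcases hT with hT | hT
    · exact hcf ⟨T, b, hT, hTs, hb⟩
    · exact hdisj' b (hE₁A hb) (hRc _ hT).1
  have trans1 : ∀ (E₁ E₂ : Set α), E₂ ⊆ F₂.A → ∀ T' h',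
      (T', h') ∈ (F.modification F₁ F₂ R₃ E₁ s₀).R → T' ⊆ E₂ →
      (∃ V, (V, h') ∈ F.R ∧ V ⊆ E₁ ∪ E₂) ∧ h' ∈ F₂.A := by
    intro E₁ E₂ hE₂A T' h' hmem hsub
    have hs₀T : s₀ ∉ T' := fun h => hs₀2 (hE₂A (hsub h))
    rcases hmem with ((h2 | hred) | hself) | hund
    · exact ⟨⟨T', by rw [hReq]; exact Or.inl (Or.inr h2),
        fun x hx => Or.inr (hsub hx)⟩, (hW2.1 _ h2).2⟩
    · obtain ⟨Tc, h'', hTc, hdec, hinc, heq⟩ := hred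
      injection heq with e1 e2
      subst e1; subst e2
      obtain ⟨hh2, hTcA, _, U, hU, hUsub⟩ := hRc _ hTc
      refine ⟨⟨U, by rw [hReq]; exact Or.inr hU, ?_⟩, hh2⟩
      intro x hx
      have hxTc : x ∈ Tc := hUsub hx
      have hxA := hTcA hxTc
      rw [hA] at hxA
      rcases hxA with h1 | h2'
      · exact Or.inl (hinc ⟨hxTc, h1⟩)
      · exact Or.inr (hsub ⟨hxTc, h2'⟩)
    · rw [Set.mem_singleton_iff] at hself
      injection hself with e1 _
      exact (hs₀T (by rw [e1]; exact rfl)).elim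
    · obtain ⟨Tc, h'', hTcund, heq⟩ := hund
      injection heq with e1 _
      exact (hs₀T (by rw [e1]; exact Or.inr rfl)).elim
  have hUcl : ∀ (E₁ E₂ : Set α), E₁ ⊆ F₁.A → E₂ ⊆ F₂.A → F₁.Closed E₁ →
      (∀ T : Set α, ∀ h : α, (T, h) ∈ F₂.S → T ⊆ E₂ → h ∈ E₂) →
      ∀ a, F.InCl (E₁ ∪ E₂) a → a ∈ E₁ ∪ E₂ := by
    intro E₁ E₂ h1A h2A h1cl h2cl a h
    induction h with
    | base h => exact h
    | step h1 _ ih =>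
        rw [hSeq] at h1
        rcases h1 with h1 | h1
        · refine Or.inl (mem_of_closed h1cl (.step h1 fun t ht => .base ?_))
          rcases ih t ht with h | h
          · exact h
          · exact ((hdisj' t ((hW1.2 _ h1).1 ht) (h2A h)).elim)
        · refine Or.inr (h2cl _ _ h1 fun t ht => ?_)
          rcases ih t ht with h | h
          · exact ((hdisj' t (h1A h) ((hW2.2 _ h1).1 ht)).elim)
          · exact h
  constructor
  · -- direction 1
    intro E₁ E₂ hE₁ hE₂
    obtain ⟨hE₁A, hE₁cf, hE₁cl, hE₁def⟩ := hE₁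
    obtain ⟨hE₂A', hE₂cf, hE₂cl, hE₂def⟩ := hE₂
    have hs₀E₂ : s₀ ∉ E₂ := fun h =>
      hE₂cf ⟨{s₀}, s₀, Or.inl (Or.inr rfl), fun x hx => by rw [hx]; exact h, h⟩
    have hE₂A : E₂ ⊆ F₂.A := by
      intro x hx
      rcases hE₂A' hx with h | h
      · exact h
      · rw [Set.mem_singleton_iff] at h; exact absurd (h ▸ hx) hs₀E₂
    have hsplit1 : ∀ x, x ∈ E₁ ∪ E₂ → x ∈ F₁.A → x ∈ E₁ := by
      intro x hx h1
      rcases hx with h | h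
      · exact h
      · exact (hdisj' x h1 (hE₂A h)).elim
    have hsplit2 : ∀ x, x ∈ E₁ ∪ E₂ → x ∈ F₂.A → x ∈ E₂ := by
      intro x hx h2
      rcases hx with h | h
      · exact (hdisj' x (hE₁A h) h2).elim
      · exact h
    have hE₂S : ∀ T : Set α, ∀ h : α, (T, h) ∈ F₂.S → T ⊆ E₂ → h ∈ E₂ := by
      intro T h hp hsub
      exact mem_of_closed hE₂cl (.step hp fun t ht => .base (hsub ht))
    have hUc := hUcl E₁ E₂ hE₁A hE₂A hE₁cl hE₂S
    refine ⟨Set.union_subset (fun x hx => hA1sub (hE₁A hx))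
      (fun x hx => hA2sub (hE₂A hx)), ?_, ?_, ?_⟩
    · -- conflict-free
      rintro ⟨T, h, hTh, hTs, hhE⟩
      rw [hReq] at hTh
      rcases hTh with (h1 | h2) | h3
      · exact hE₁cf ⟨T, h, h1, fun x hx => hsplit1 x (hTs hx) ((hW1.1 _ h1).1 hx),
          hsplit1 h hhE (hW1.1 _ h1).2⟩
      · exact hE₂cf ⟨T, h, Or.inl (Or.inl (Or.inl h2)),
          fun x hx => hsplit2 x (hTs hx) ((hW2.1 _ h2).1 hx),
          hsplit2 h hhE (hW2.1 _ h2).2⟩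
      · have hTc : (F.cl T, h) ∈ F.closedLinks R₃ := ⟨T, h, h3, rfl⟩
        have hTcU : F.cl T ⊆ E₁ ∪ E₂ := fun x hx => hUc x (InCl.mono_E hTs hx)
        have hhE₂ : h ∈ E₂ := hsplit2 h hhE (hR3 _ h3).2.2
        by_cases hdec : F.cl T ∩ attackedBy (F₁.R ∪ F.closedLinks R₃) E₁ = ∅
        · by_cases hinc : F.cl T ∩ F₁.A ⊆ E₁
          · exact hE₂cf ⟨F.cl T ∩ F₂.A, h,
              Or.inl (Or.inl (Or.inr ⟨F.cl T, h, hTc, hdec, hinc, rfl⟩)),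
              fun x hx => hsplit2 x (hTcU hx.1) hx.2, hhE₂⟩
          · obtain ⟨x, hx, hxn⟩ := Set.not_subset.mp hinc
            exact hxn (hsplit1 x (hTcU hx.1) hx.2)
        · obtain ⟨b, hbTc, hbat⟩ := Set.nonempty_iff_ne_empty.mpr hdec
          obtain ⟨T'', hT'', hT''E⟩ := hbat
          rcases hT'' with h1 | hc
          · exact hE₁cf ⟨T'', b, h1, hT''E, hsplit1 b (hTcU hbTc) (hW1.1 _ h1).2⟩
          · refine hE₂cf ⟨T'' ∩ F₂.A, b,
              Or.inl (Or.inl (Or.inr ⟨T'', b, hc, ?_, fun x hx => hT''E hx.1, rfl⟩)),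
              fun x hx => (hdisj' x (hE₁A (hT''E hx.1)) hx.2).elim,
              hsplit2 b (hTcU hbTc) (hRc _ hc).1⟩
            refine Set.eq_empty_iff_forall_notMem.mpr fun c hcm => ?_
            exact hplus E₁ hE₁A hE₁cf c (hT''E hcm.1) hcm.2
    · -- closed
      exact Set.Subset.antisymm (fun a ha => hUc a ha) subset_cl
    · -- defends
      intro a ha D hDA hDcl hatk
      obtain ⟨T, hTR, hTD⟩ := hatk
      rw [hReq] at hTR
      rcases ha with haE₁ | haE₂
      · have haA1 : a ∈ F₁.A := hE₁A haE₁
        rcases hTR with (h1 | h2) | h3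
        · have hD1cl : F₁.Closed (D ∩ F₁.A) := by
            refine Set.Subset.antisymm (fun x hx => ?_) subset_cl
            refine ⟨mem_of_closed hDcl
              (InCl.mono_E Set.inter_subset_left (InCl.mono_S hS1 hx)), ?_⟩
            exact InCl_mem_A Set.inter_subset_right (fun p hp => (hW1.2 p hp).2) hx
          obtain ⟨T', h', hT'R, hT'E, hh'⟩ := hE₁def a haE₁ (D ∩ F₁.A)
            Set.inter_subset_right hD1cl
            ⟨T, h1, fun x hx => ⟨hTD hx, (hW1.1 _ h1).1 hx⟩⟩
          exact ⟨T', h', by rw [hReq]; exact Or.inl (Or.inl hT'R),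
            fun x hx => Or.inl (hT'E hx), hh'.1⟩
        · exact (hdisj' a haA1 (hW2.1 _ h2).2).elim
        · exact (hdisj' a haA1 (hR3 _ h3).2.2).elim
      · have haA2 : a ∈ F₂.A := hE₂A haE₂
        have key : (∃ T₂, (T₂, a) ∈ (F.modification F₁ F₂ R₃ E₁ s₀).R ∧
            T₂ ⊆ (D ∩ F₂.A) ∪ {s₀}) ∨ F.Attacks (E₁ ∪ E₂) D := by
          rcases hTR with (h1 | h2) | h3
          · exact (hdisj' a (hW1.1 _ h1).2 haA2).elim
          · exact Or.inl ⟨T, Or.inl (Or.inl (Or.inl h2)),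
              fun x hx => Or.inl ⟨hTD hx, (hW2.1 _ h2).1 hx⟩⟩
          · have hTc : (F.cl T, a) ∈ F.closedLinks R₃ := ⟨T, a, h3, rfl⟩
            have hTcD : F.cl T ⊆ D := fun x hx =>
              mem_of_closed hDcl (InCl.mono_E hTD hx)
            by_cases hdec : F.cl T ∩ attackedBy (F₁.R ∪ F.closedLinks R₃) E₁ = ∅
            · by_cases hinc : F.cl T ∩ F₁.A ⊆ E₁
              · exact Or.inl ⟨F.cl T ∩ F₂.A,
                  Or.inl (Or.inl (Or.inr ⟨F.cl T, a, hTc, hdec, hinc, rfl⟩)),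
                  fun x hx => Or.inl ⟨hTcD hx.1, hx.2⟩⟩
              · exact Or.inl ⟨(F.cl T ∩ F₂.A) ∪ {s₀},
                  Or.inr ⟨F.cl T, a, ⟨hTc, hdec, hinc⟩, rfl⟩,
                  Set.union_subset (fun x hx => Or.inl ⟨hTcD hx.1, hx.2⟩)
                    (fun x hx => Or.inr hx)⟩
            · obtain ⟨b, hbTc, hbat⟩ := Set.nonempty_iff_ne_empty.mpr hdec
              obtain ⟨T'', hT'', hT''E⟩ := hbat
              rcases hT'' with h1 | hc
              · exact Or.inr ⟨T'', b, by rw [hReq]; exact Or.inl (Or.inl h1),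
                  fun x hx => Or.inl (hT''E hx), hTcD hbTc⟩
              · obtain ⟨_, _, _, U, hU, hUsub⟩ := hRc _ hc
                exact Or.inr ⟨U, b, by rw [hReq]; exact Or.inr hU,
                  fun x hx => Or.inl (hT''E (hUsub hx)), hTcD hbTc⟩
        rcases key with ⟨T₂, hT₂, hT₂D⟩ | hkey
        · have hD'cl : (F.modification F₁ F₂ R₃ E₁ s₀).Closed
              ((D ∩ F₂.A) ∪ {s₀}) := by
            refine Set.Subset.antisymm (fun x hx => ?_) subset_cl
            induction hx with
            | base h => exact h
            | step h1 _ ih =>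
                refine Or.inl ⟨?_, (hW2.2 _ h1).2⟩
                refine mem_of_closed hDcl (.step (hS2 h1) fun t ht => .base ?_)
                rcases ih t ht with h | h
                · exact h.1
                · exact ((hs₀2 (h ▸ ((hW2.2 _ h1).1 ht))).elim)
          have hD'A : (D ∩ F₂.A) ∪ {s₀} ⊆ (F.modification F₁ F₂ R₃ E₁ s₀).A :=
            Set.union_subset (fun x hx => Or.inl hx.2) (fun x hx => Or.inr hx)
          obtain ⟨T', h', hT'R, hT'E, hh'⟩ := hE₂def a haE₂ _ hD'A hD'cl
            ⟨T₂, hT₂, hT₂D⟩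
          obtain ⟨⟨V, hV, hVsub⟩, hh'A2⟩ := trans1 E₁ E₂ hE₂A T' h' hT'R hT'E
          refine ⟨V, h', hV, hVsub, ?_⟩
          rcases hh' with h | h
          · exact h.1
          · exact ((hs₀2 (h ▸ hh'A2)).elim)
        · exact hkey
  · -- direction 2
    intro E hE
    obtain ⟨hEA, hEcf, hEcl, hEdef⟩ := hE
    have hclE : ∀ {x}, F.InCl E x → x ∈ E := fun h => mem_of_closed hEcl h
    have trans2 : ∀ T' h', (T', h') ∈ F.R → T' ⊆ E → h' ∈ F₂.A →
        ∃ V, (V, h') ∈ (F.modification F₁ F₂ R₃ (E ∩ F₁.A) s₀).R ∧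
          V ⊆ E ∩ F₂.A := by
      intro T' h' hmem hsub hh'
      rw [hReq] at hmem
      rcases hmem with (h1 | h2) | h3
      · exact (hdisj' h' (hW1.1 _ h1).2 hh').elim
      · exact ⟨T', Or.inl (Or.inl (Or.inl h2)),
          fun x hx => ⟨hsub hx, (hW2.1 _ h2).1 hx⟩⟩
      · have hclT'E : F.cl T' ⊆ E := fun x hx => hclE (InCl.mono_E hsub hx)
        refine ⟨F.cl T' ∩ F₂.A, Or.inl (Or.inl (Or.inr ⟨F.cl T', h',
          ⟨T', h', h3, rfl⟩, ?_, fun x hx => ⟨hclT'E hx.1, hx.2⟩, rfl⟩)),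
          fun x hx => ⟨hclT'E hx.1, hx.2⟩⟩
        refine Set.eq_empty_iff_forall_notMem.mpr fun b hb => ?_
        obtain ⟨hbT, T'', hT'', hT''E⟩ := hb
        rcases hT'' with h1 | hc
        · exact hEcf ⟨T'', b, by rw [hReq]; exact Or.inl (Or.inl h1),
            fun x hx => (hT''E hx).1, hclT'E hbT⟩
        · obtain ⟨_, _, _, U, hU, hUsub⟩ := hRc _ hc
          exact hEcf ⟨U, b, by rw [hReq]; exact Or.inr hU,
            fun x hx => (hT''E (hUsub hx)).1, hclT'E hbT⟩
    constructor
    · -- E ∩ A₁ admissible in F₁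
      refine ⟨Set.inter_subset_right, ?_, ?_, ?_⟩
      · rintro ⟨T, h, hTh, hTs, hhE⟩
        exact hEcf ⟨T, h, by rw [hReq]; exact Or.inl (Or.inl hTh),
          fun x hx => (hTs hx).1, hhE.1⟩
      · refine Set.Subset.antisymm (fun x hx => ?_) subset_cl
        refine ⟨hclE (InCl.mono_S hS1
          (InCl.mono_E Set.inter_subset_left hx)), ?_⟩
        exact InCl_mem_A Set.inter_subset_right (fun p hp => (hW1.2 p hp).2) hx
      · intro a ha D hDA hDcl hatk
        obtain ⟨T, hTR, hTD⟩ := hatk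
        obtain ⟨T', h', hT'R, hT'E, hh'⟩ := hEdef a ha.1 (F.cl D)
          (fun x hx => hclA (hDA.trans hA1sub) hx) closed_cl
          ⟨T, by rw [hReq]; exact Or.inl (Or.inl hTR),
            fun x hx => subset_cl (hTD hx)⟩
        rw [hReq] at hT'R
        rcases hT'R with (h1 | h2) | h3
        · have hh'A1 : h' ∈ F₁.A := (hW1.1 _ h1).2
          have hh'D : h' ∈ D := mem_of_closed hDcl
            (InCl.mono_E Set.inter_subset_left (hres1 hh' hh'A1))
          exact ⟨T', h', h1, fun x hx => ⟨hT'E hx, (hW1.1 _ h1).1 hx⟩, hh'D⟩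
        · have hh'A2 : h' ∈ F₂.A := (hW2.1 _ h2).2
          have hh'E : h' ∈ E := hclE (InCl.mono_S hS2 (InCl.mono_E
            (fun x hx => ((hdisj' x (hDA hx.1) hx.2).elim : x ∈ E))
            (hres2 hh' hh'A2)))
          exact ((hEcf ⟨T', h', by rw [hReq]; exact Or.inl (Or.inr h2),
            hT'E, hh'E⟩).elim)
        · have hh'A2 : h' ∈ F₂.A := (hR3 _ h3).2.2
          have hh'E : h' ∈ E := hclE (InCl.mono_S hS2 (InCl.mono_E
            (fun x hx => ((hdisj' x (hDA hx.1) hx.2).elim : x ∈ E))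
            (hres2 hh' hh'A2)))
          exact ((hEcf ⟨T', h', by rw [hReq]; exact Or.inr h3,
            hT'E, hh'E⟩).elim)
    · -- E ∩ A₂ admissible in the modification
      refine ⟨fun x hx => Or.inl hx.2, ?_, ?_, ?_⟩
      · -- conflict-free
        rintro ⟨T, h, hTh, hTs, hhE⟩
        rcases hTh with ((h2 | hred) | hself) | hund
        · exact hEcf ⟨T, h, by rw [hReq]; exact Or.inl (Or.inr h2),
            fun x hx => (hTs hx).1, hhE.1⟩
        · obtain ⟨Tc, h'', hTc, hdec, hinc, heq⟩ := hred
          injection heq with e1 e2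
          subst e1; subst e2
          obtain ⟨_, hTcA, _, U, hU, hUsub⟩ := hRc _ hTc
          refine hEcf ⟨U, h, by rw [hReq]; exact Or.inr hU,
            fun x hx => ?_, hhE.1⟩
          have hxTc := hUsub hx
          have hxA := hTcA hxTc
          rw [hA] at hxA
          rcases hxA with ha1 | ha2
          · exact (hinc ⟨hxTc, ha1⟩).1
          · exact (hTs ⟨hxTc, ha2⟩).1
        · rw [Set.mem_singleton_iff] at hself
          injection hself with e1 e2
          exact hs₀2 (e2 ▸ hhE.2)
        · obtain ⟨Tc, h'', hund', heq⟩ := hund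
          injection heq with e1 _
          have hsT : s₀ ∈ T := by rw [e1]; exact Or.inr rfl
          exact hs₀2 (hTs hsT).2
      · -- closed
        refine Set.Subset.antisymm (fun x hx => ?_) subset_cl
        have hx2 : F₂.InCl (E ∩ F₂.A) x :=
          InCl.mono_S (F := F.modification F₁ F₂ R₃ (E ∩ F₁.A) s₀) (G := F₂)
            (fun _ h => h) hx
        refine ⟨hclE (InCl.mono_S hS2
          (InCl.mono_E Set.inter_subset_left hx2)), ?_⟩
        exact InCl_mem_A Set.inter_subset_right (fun p hp => (hW2.2 p hp).2) hx2
      · -- defends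
        intro a ha D hDA hDcl hatk
        obtain ⟨T₂, hT₂R, hT₂D⟩ := hatk
        have hD2 : ∀ {x}, F₂.InCl (D ∩ F₂.A) x → x ∈ D := fun {x} hx =>
          mem_of_closed hDcl (InCl.mono_E Set.inter_subset_left
            (InCl.mono_S (F := F₂) (G := F.modification F₁ F₂ R₃ (E ∩ F₁.A) s₀)
              (fun _ h => h) hx))
        have headE : ∀ B : Set α, B ∩ F₁.A ⊆ E →
            ∀ T' h', (T', h') ∈ F₁.R → T' ⊆ E ∩ F₁.A → h' ∈ F.cl B →
              h' ∈ F₁.A → False := by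
          intro B hBE T' h' h1 hT'E hh' h'A1
          exact hEcf ⟨T', h', by rw [hReq]; exact Or.inl (Or.inl h1),
            fun x hx => (hT'E hx).1,
            hclE (InCl.mono_S hS1 (InCl.mono_E hBE (hres1 hh' h'A1)))⟩
        have main : ∀ B : Set α, B ⊆ F.A → B ∩ F₂.A ⊆ D →
            (∃ U, (U, a) ∈ F.R ∧ U ⊆ B) →
            (∀ T' h', (T', h') ∈ F₁.R → T' ⊆ E ∩ F₁.A → h' ∈ F.cl B →
              h' ∈ F₁.A → False) →
            (F.modification F₁ F₂ R₃ (E ∩ F₁.A) s₀).Attacks (E ∩ F₂.A) D := by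
          intro B hBA hBD hatk' hhead
          obtain ⟨U, hU, hUB⟩ := hatk'
          obtain ⟨T', h', hT'R, hT'E, hh'⟩ := hEdef a ha.1 (F.cl B)
            (fun x hx => hclA hBA hx) closed_cl
            ⟨U, hU, fun x hx => subset_cl (hUB hx)⟩
          have hh'A := hclA hBA hh'
          rw [hA] at hh'A
          rcases hh'A with h1A | h2A
          · rw [hReq] at hT'R
            rcases hT'R with (hr1 | hr2) | hr3
            · exact ((hhead T' h' hr1
                (fun x hx => ⟨hT'E hx, (hW1.1 _ hr1).1 hx⟩) hh' h1A).elim)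
            · exact (hdisj' h' h1A (hW2.1 _ hr2).2).elim
            · exact (hdisj' h' h1A (hR3 _ hr3).2.2).elim
          · obtain ⟨V, hV, hVsub⟩ := trans2 T' h' hT'R hT'E h2A
            refine ⟨V, h', hV, hVsub, ?_⟩
            exact hD2 (InCl.mono_E
              (fun x hx => (⟨hBD hx, hx.2⟩ : x ∈ D ∩ F₂.A))
              (hres2 hh' h2A))
        rcases hT₂R with ((h2 | hred) | hself) | hund
        · refine main T₂ (fun x hx => hA2sub ((hW2.1 _ h2).1 hx))
            (fun x hx => hT₂D hx.1)
            ⟨T₂, by rw [hReq]; exact Or.inl (Or.inr h2), Set.Subset.rfl⟩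
            (headE T₂ fun x hx =>
              ((hdisj' x hx.2 ((hW2.1 _ h2).1 hx.1)).elim : x ∈ E))
        · obtain ⟨Tc, h'', hTc, hdec, hinc, heq⟩ := hred
          injection heq with e1 e2
          subst e1; subst e2
          obtain ⟨_, hTcA, _, U, hU, hUsub⟩ := hRc _ hTc
          exact main Tc hTcA (fun x hx => hT₂D hx)
            ⟨U, by rw [hReq]; exact Or.inr hU, hUsub⟩
            (headE Tc fun x hx => (hinc hx).1)
        · rw [Set.mem_singleton_iff] at hself
          injection hself with _ e2
          exact ((hs₀2 (e2 ▸ ha.2)).elim)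
        · obtain ⟨Tc, h'', ⟨hTc, hdec, hninc⟩, heq⟩ := hund
          injection heq with e1 e2
          subst e1; subst e2
          obtain ⟨_, hTcA, hTccl, U, hU, hUsub⟩ := hRc _ hTc
          refine main Tc hTcA (fun x hx => hT₂D (Or.inl hx))
            ⟨U, by rw [hReq]; exact Or.inr hU, hUsub⟩ ?_
          intro T' h' h1 hT'E hh' h'A1
          have hh'Tc : h' ∈ Tc := mem_of_closed hTccl
            (InCl.mono_S hS1
              (InCl.mono_E Set.inter_subset_left (hres1 hh' h'A1)))
          exact Set.eq_empty_iff_forall_notMem.mp hdec h'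
            ⟨hh'Tc, T', Or.inl h1, hT'E⟩
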